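/- arXiv:2403.01372 — 3 statements merged into one kernel-verified Lean document; each statement's English description precedes it below -/
import Mathlib

section
/- For every integer m ≥ 2, the function ρ ↦ ρ^{2m−1} (1 − log ρ)^{2m−1} · (1 − ρ^{2m}(1 − log ρ)^{2m})^{−(2m−1)/(2m)} is not integrable on (0,1); more precisely, lim_{α→1⁻} ∫_{0}^{α} ρ^{2m−1} (1 − log ρ)^{2m−1} (1 − ρ^{2m}(1 − log ρ)^{2m})^{−(2m−1)/(2m)} dρ = ∞. (The reason is that 1 − t(1 − log t) vanishes to second order at t = 1, so the integrand blows up like (1−ρ)^{−2(2m−1)/(2m)} with exponent 2(2m−1)/(2m) > 1.) -/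
open Real Set MeasureTheory Filter

private lemma aux_g_pos {ρ : ℝ} (h0 : 0 < ρ) (h1 : ρ < 1) : 0 < ρ * (1 - Real.log ρ) := by
  have := Real.log_neg h0 h1
  nlinarith

private lemma aux_g_lt_one {ρ : ℝ} (h0 : 0 < ρ) (h1 : ρ < 1) : ρ * (1 - Real.log ρ) < 1 := by
  have h : Real.log ρ⁻¹ < ρ⁻¹ - 1 :=
    Real.log_lt_sub_one_of_pos (inv_pos.2 h0) (by rw [ne_eq, inv_eq_one]; exact h1.ne)
  rw [Real.log_inv] at h
  have h2 := mul_lt_mul_of_pos_left h h0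
  have h3 : ρ * ρ⁻¹ = 1 := mul_inv_cancel₀ h0.ne'
  nlinarith

private lemma aux_mono : StrictMonoOn (fun ρ : ℝ => ρ * (1 - Real.log ρ)) (Set.Ioc 0 1) := by
  apply strictMonoOn_of_deriv_pos (convex_Ioc 0 1)
  · exact continuousOn_id.mul (continuousOn_const.sub
      (Real.continuousOn_log.mono fun x hx => Set.mem_compl_singleton_iff.mpr hx.1.ne'))
  · intro x hx
    rw [interior_Ioc] at hx
    have hd : HasDerivAt (fun ρ : ℝ => ρ * (1 - Real.log ρ)) (-Real.log x) x := by
      have h : HasDerivAt (fun ρ : ℝ => ρ * (1 - Real.log ρ)) (1 * (1 - Real.log x) + x * (0 - x⁻¹)) x := (hasDerivAt_id x).mul ((hasDerivAt_const x (1:ℝ)).sub (Real.hasDerivAt_log hx.1.ne'))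
      convert h using 1
      rw [zero_sub, mul_neg, mul_inv_cancel₀ hx.1.ne']
      ring
    rw [hd.deriv]
    have := Real.log_neg hx.1 hx.2
    linarith

private lemma aux_one_sub_le {ρ : ℝ} (h0 : 0 < ρ) : 1 - ρ * (1 - Real.log ρ) ≤ (1 - ρ)^2 := by
  have hlog := Real.log_le_sub_one_of_pos h0
  nlinarith [mul_le_mul_of_nonneg_left hlog h0.le]

/-- For every integer `m ≥ 2`, the function
`ρ ↦ ρ^{2m−1}(1 − log ρ)^{2m−1} (1 − ρ^{2m}(1 − log ρ)^{2m})^{−(2m−1)/(2m)}`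
is not integrable on `(0,1)`; more precisely, its integral over `(0, α)` tends to `∞`
as `α → 1⁻`. -/
theorem not_integrable_on_Ioo_zero_one (m : ℕ) (hm : 2 ≤ m)
    (f : ℝ → ℝ)
    (hf : ∀ ρ, f ρ = ρ ^ (2 * m - 1) * (1 - Real.log ρ) ^ (2 * m - 1) *
      (1 - ρ ^ (2 * m) * (1 - Real.log ρ) ^ (2 * m))
        ^ (-(2 * (m : ℝ) - 1) / (2 * (m : ℝ)))) :
    ¬ MeasureTheory.IntegrableOn f (Set.Ioo (0 : ℝ) 1) ∧
    Filter.Tendsto (fun α => ∫ ρ in Set.Ioo (0 : ℝ) α, f ρ)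
      (nhdsWithin 1 (Set.Iio 1)) Filter.atTop := by
  have hfe : f = fun ρ : ℝ => ρ ^ (2 * m - 1) * (1 - Real.log ρ) ^ (2 * m - 1) *
      (1 - ρ ^ (2 * m) * (1 - Real.log ρ) ^ (2 * m))
        ^ (-(2 * (m : ℝ) - 1) / (2 * (m : ℝ))) := funext hf
  subst hfe
  have hm0 : (0:ℝ) < (m:ℝ) := by positivity
  have hm2 : (2:ℝ) ≤ (m:ℝ) := by exact_mod_cast hm
  set e : ℝ := -(2 * (m : ℝ) - 1) / (2 * (m : ℝ)) with he_def
  set q : ℝ := (2 * (m:ℝ) - 1) / (m:ℝ) with hq_def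
  have he_neg : e < 0 := div_neg_of_neg_of_pos (by linarith) (by linarith)
  have hq1 : 1 < q := by
    rw [hq_def, lt_div_iff₀ hm0]
    linarith
  have h2e : (2:ℝ) * e = -q := by
    rw [he_def, hq_def]
    field_simp
  set C : ℝ := (1/2:ℝ)^(2*m-1) * (2*(m:ℝ))^e with hC_def
  have hC : 0 < C := by
    apply mul_pos (by positivity)
    exact Real.rpow_pos_of_pos (by linarith) e
  -- nonnegativity of the integrand
  have hF0 : ∀ ρ ∈ Ioo (0:ℝ) 1, (0:ℝ) ≤ ρ ^ (2 * m - 1) * (1 - Real.log ρ) ^ (2 * m - 1) *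
      (1 - ρ ^ (2 * m) * (1 - Real.log ρ) ^ (2 * m)) ^ e := by
    intro ρ hρ
    have hlog := Real.log_neg hρ.1 hρ.2
    apply mul_nonneg (mul_nonneg (pow_nonneg hρ.1.le _) (pow_nonneg (by linarith) _))
    exact Real.rpow_nonneg (by
      rw [← mul_pow]
      have h1 := aux_g_lt_one hρ.1 hρ.2
      have h0 := aux_g_pos hρ.1 hρ.2
      have := pow_le_one₀ h0.le h1.le (n := 2*m)
      linarith) _
  -- the key lower bound near 1
  have key : ∀ ρ ∈ Ioo (1/2:ℝ) 1, C * (1-ρ) ^ (-q) ≤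
      ρ ^ (2 * m - 1) * (1 - Real.log ρ) ^ (2 * m - 1) *
      (1 - ρ ^ (2 * m) * (1 - Real.log ρ) ^ (2 * m)) ^ e := by
    intro ρ hρ
    have hρ0 : 0 < ρ := lt_trans one_half_pos hρ.1
    have hρ1 : ρ < 1 := hρ.2
    have hlog := Real.log_neg hρ0 hρ1
    have hg0 : 0 < ρ * (1 - Real.log ρ) := aux_g_pos hρ0 hρ1
    have hg1 : ρ * (1 - Real.log ρ) < 1 := aux_g_lt_one hρ0 hρ1
    have hgh : (1/2:ℝ) ≤ ρ * (1 - Real.log ρ) := by nlinarith [hρ.1]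
    have hA0 : 0 < 1 - (ρ * (1 - Real.log ρ))^(2*m) := by
      have := pow_lt_one₀ hg0.le hg1 (by omega : 2*m ≠ 0)
      linarith
    have hber : 1 - (ρ * (1 - Real.log ρ))^(2*m) ≤ (2*(m:ℝ)) * (1 - ρ * (1 - Real.log ρ)) := by
      have h := one_add_mul_le_pow (a := ρ * (1 - Real.log ρ) - 1) (by nlinarith) (2*m)
      have h' : (1:ℝ) + (ρ * (1 - Real.log ρ) - 1) = ρ * (1 - Real.log ρ) := by ring
      rw [h'] at h
      push_cast at h
      linarith
    have hL3 := aux_one_sub_le hρ0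
    have hAB : 1 - (ρ * (1 - Real.log ρ))^(2*m) ≤ (2*(m:ℝ)) * (1-ρ)^2 := by
      nlinarith [mul_le_mul_of_nonneg_left hL3 (by linarith : (0:ℝ) ≤ 2*(m:ℝ))]
    have hstep : ((2*(m:ℝ)) * (1-ρ)^2) ^ e ≤ (1 - (ρ * (1 - Real.log ρ))^(2*m)) ^ e :=
      Real.rpow_le_rpow_of_nonpos hA0 hAB he_neg.le
    have hexp : ((2*(m:ℝ)) * (1-ρ)^2) ^ e = (2*(m:ℝ))^e * (1-ρ)^(-q) := by
      rw [Real.mul_rpow (by linarith) (by positivity)]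
      congr 1
      rw [← Real.rpow_two, ← Real.rpow_mul (by linarith : (0:ℝ) ≤ 1-ρ), h2e]
    have hgpow : (1/2:ℝ)^(2*m-1) ≤ (ρ * (1 - Real.log ρ))^(2*m-1) :=
      pow_le_pow_left₀ (by norm_num) hgh _
    have hFr : ρ ^ (2 * m - 1) * (1 - Real.log ρ) ^ (2 * m - 1) *
        (1 - ρ ^ (2 * m) * (1 - Real.log ρ) ^ (2 * m)) ^ e
        = (ρ * (1 - Real.log ρ))^(2*m-1) * (1 - (ρ * (1 - Real.log ρ))^(2*m)) ^ e := by
      rw [mul_pow, mul_pow]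
    rw [hFr]
    calc C * (1-ρ)^(-q) = (1/2:ℝ)^(2*m-1) * ((2*(m:ℝ))^e * (1-ρ)^(-q)) := by
          rw [hC_def]; ring
      _ = (1/2:ℝ)^(2*m-1) * (((2*(m:ℝ)) * (1-ρ)^2) ^ e) := by rw [hexp]
      _ ≤ (ρ * (1 - Real.log ρ))^(2*m-1) * (1 - (ρ * (1 - Real.log ρ))^(2*m)) ^ e :=
          mul_le_mul hgpow hstep (Real.rpow_nonneg (by positivity) _) (pow_nonneg hg0.le _)
  -- measurability
  have hmeas : Measurable fun ρ : ℝ => ρ ^ (2 * m - 1) * (1 - Real.log ρ) ^ (2 * m - 1) *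
      (1 - ρ ^ (2 * m) * (1 - Real.log ρ) ^ (2 * m)) ^ e := by
    apply Measurable.mul
    · exact (measurable_id.pow_const _).mul ((measurable_const.sub Real.measurable_log).pow_const _)
    · exact (measurable_const.sub ((measurable_id.pow_const _).mul
        ((measurable_const.sub Real.measurable_log).pow_const _))).pow_const _
  -- integrability on Ioo 0 α for α < 1
  have hInt : ∀ α ∈ Ioo (1/2:ℝ) 1, IntegrableOn (fun ρ : ℝ =>
      ρ ^ (2 * m - 1) * (1 - Real.log ρ) ^ (2 * m - 1) *
      (1 - ρ ^ (2 * m) * (1 - Real.log ρ) ^ (2 * m)) ^ e) (Ioo 0 α) := by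
    intro α hα
    have hα0 : 0 < α := lt_trans one_half_pos hα.1
    have hgα0 : 0 < α * (1 - Real.log α) := aux_g_pos hα0 hα.2
    have hgα1 : α * (1 - Real.log α) < 1 := aux_g_lt_one hα0 hα.2
    have hδ0 : 0 < 1 - (α * (1 - Real.log α))^(2*m) := by
      have := pow_lt_one₀ hgα0.le hgα1 (by omega : 2*m ≠ 0)
      linarith
    apply Measure.integrableOn_of_bounded (M := (1 - (α * (1 - Real.log α))^(2*m)) ^ e)
      measure_Ioo_lt_top.ne hmeas.aestronglyMeasurable
    rw [ae_restrict_iff' measurableSet_Ioo]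
    filter_upwards with ρ hρ
    have hρ1 : ρ < 1 := lt_trans hρ.2 hα.2
    have hg0 : 0 < ρ * (1 - Real.log ρ) := aux_g_pos hρ.1 hρ1
    have hg1 : ρ * (1 - Real.log ρ) < 1 := aux_g_lt_one hρ.1 hρ1
    have hmle : ρ * (1 - Real.log ρ) ≤ α * (1 - Real.log α) :=
      aux_mono.monotoneOn ⟨hρ.1, hρ1.le⟩ ⟨hα0, hα.2.le⟩ hρ.2.le
    have hA0 : 0 < 1 - (ρ * (1 - Real.log ρ))^(2*m) := by
      have := pow_lt_one₀ hg0.le hg1 (by omega : 2*m ≠ 0)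
      linarith
    have hle : 1 - (α * (1 - Real.log α))^(2*m) ≤ 1 - (ρ * (1 - Real.log ρ))^(2*m) := by
      have := pow_le_pow_left₀ hg0.le hmle (2*m)
      linarith
    rw [Real.norm_eq_abs, abs_of_nonneg (hF0 ρ ⟨hρ.1, hρ1⟩)]
    have hFr : ρ ^ (2 * m - 1) * (1 - Real.log ρ) ^ (2 * m - 1) *
        (1 - ρ ^ (2 * m) * (1 - Real.log ρ) ^ (2 * m)) ^ e
        = (ρ * (1 - Real.log ρ))^(2*m-1) * (1 - (ρ * (1 - Real.log ρ))^(2*m)) ^ e := by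
      rw [mul_pow, mul_pow]
    rw [hFr]
    calc (ρ * (1 - Real.log ρ))^(2*m-1) * (1 - (ρ * (1 - Real.log ρ))^(2*m)) ^ e
        ≤ 1 * ((1 - (α * (1 - Real.log α))^(2*m)) ^ e) :=
          mul_le_mul (pow_le_one₀ hg0.le hg1.le)
            (Real.rpow_le_rpow_of_nonpos hδ0 hle he_neg.le)
            (Real.rpow_nonneg hA0.le _) zero_le_one
      _ = (1 - (α * (1 - Real.log α))^(2*m)) ^ e := one_mul _
  -- lower bound for the partial integrals
  have hlow : ∀ α ∈ Ioo (1/2:ℝ) 1,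
      C * (((1-α)^(1-q) - (1/2:ℝ)^(1-q))/(q-1)) ≤
      ∫ ρ in Ioo (0:ℝ) α, ρ ^ (2 * m - 1) * (1 - Real.log ρ) ^ (2 * m - 1) *
        (1 - ρ ^ (2 * m) * (1 - Real.log ρ) ^ (2 * m)) ^ e := by
    intro α hα
    have hα0 : 0 < α := lt_trans one_half_pos hα.1
    have hcont : ContinuousOn (fun ρ : ℝ => C * (1-ρ)^(-q)) (Icc (1/2:ℝ) α) := by
      apply ContinuousOn.mul continuousOn_const
      apply ContinuousOn.rpow_const ((continuous_const.sub continuous_id).continuousOn)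
      intro x hx
      left
      have := hx.2
      have := hα.2
      intro h
      simp only [Pi.sub_apply, id_eq] at h
      linarith [hx.2, hα.2, sub_eq_zero.mp h]
    have hcint : IntegrableOn (fun ρ : ℝ => C * (1-ρ)^(-q)) (Ioo (1/2:ℝ) α) :=
      (hcont.integrableOn_Icc).mono_set Ioo_subset_Icc_self
    have hval : ∫ ρ in Ioo (1/2:ℝ) α, C * (1-ρ)^(-q) =
        C * (((1-α)^(1-q) - (1/2:ℝ)^(1-q))/(q-1)) := by
      rw [← integral_Ioc_eq_integral_Ioo, ← intervalIntegral.integral_of_le hα.1.le,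
        intervalIntegral.integral_const_mul]
      have hcs := intervalIntegral.integral_comp_sub_left (a := (1/2:ℝ)) (b := α)
        (fun u : ℝ => u ^ (-q)) 1
      rw [hcs]
      rw [integral_rpow (Or.inr ⟨by linarith, notMem_uIcc_of_lt
        (by linarith [hα.2]) (by norm_num)⟩)]
      have h1 : -q + 1 = 1 - q := by ring
      rw [h1]
      have hq1' : q - 1 ≠ 0 := by linarith
      have h2 : (1:ℝ) - 1/2 = 1/2 := by norm_num
      rw [h2]
      congr 1
      have h3 : (1:ℝ) - q = -(q-1) := by ring
      rw [h3, div_neg, ← neg_div, neg_sub]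
    rw [← hval]
    calc ∫ ρ in Ioo (1/2:ℝ) α, C * (1-ρ)^(-q)
        ≤ ∫ ρ in Ioo (1/2:ℝ) α, ρ ^ (2 * m - 1) * (1 - Real.log ρ) ^ (2 * m - 1) *
            (1 - ρ ^ (2 * m) * (1 - Real.log ρ) ^ (2 * m)) ^ e :=
          setIntegral_mono_on hcint ((hInt α hα).mono_set
            (Ioo_subset_Ioo_left (by norm_num))) measurableSet_Ioo
            (fun ρ hρ => key ρ ⟨hρ.1, lt_trans hρ.2 hα.2⟩)
      _ ≤ ∫ ρ in Ioo (0:ℝ) α, ρ ^ (2 * m - 1) * (1 - Real.log ρ) ^ (2 * m - 1) *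
            (1 - ρ ^ (2 * m) * (1 - Real.log ρ) ^ (2 * m)) ^ e := by
          apply setIntegral_mono_set (hInt α hα)
          · filter_upwards [ae_restrict_mem measurableSet_Ioo] with ρ hρ
            exact hF0 ρ ⟨hρ.1, lt_trans hρ.2 hα.2⟩
          · exact HasSubset.Subset.eventuallyLE (Ioo_subset_Ioo_left (by norm_num))
  -- the comparison function tends to infinity
  have htend : Tendsto (fun α : ℝ => C * (((1-α)^(1-q) - (1/2:ℝ)^(1-q))/(q-1)))
      (nhdsWithin 1 (Iio 1)) atTop := by
    have h1a : Tendsto (fun α : ℝ => 1 - α) (nhdsWithin 1 (Iio 1)) (nhdsWithin 0 (Ioi 0)) := by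
      apply tendsto_nhdsWithin_of_tendsto_nhds_of_eventually_within
      · exact Tendsto.mono_left ((continuous_const.sub continuous_id).tendsto' 1 0 (by norm_num))
          nhdsWithin_le_nhds
      · exact eventually_mem_nhdsWithin.mono (fun x hx => by
          simp only [mem_Iio] at hx; simp only [mem_Ioi]; linarith)
    have h1b : Tendsto (fun x : ℝ => x ^ (1-q)) (nhdsWithin 0 (Ioi 0)) atTop := by
      have h := (tendsto_rpow_atTop (by linarith : (0:ℝ) < q - 1)).comp tendsto_inv_nhdsGT_zero
      apply h.congr'
      filter_upwards [self_mem_nhdsWithin] with x hx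
      simp only [mem_Ioi] at hx
      simp only [Function.comp_apply]
      rw [Real.inv_rpow (le_of_lt hx), ← Real.rpow_neg (le_of_lt hx), neg_sub]
    have h3 : Tendsto (fun α : ℝ => (1-α)^(1-q)) (nhdsWithin 1 (Iio 1)) atTop := h1b.comp h1a
    have h4 : Tendsto (fun α : ℝ => ((1-α)^(1-q) - (1/2:ℝ)^(1-q))/(q-1) * C)
        (nhdsWithin 1 (Iio 1)) atTop := by
      apply Tendsto.atTop_mul_const hC
      apply Tendsto.atTop_div_const (by linarith : (0:ℝ) < q - 1)
      exact tendsto_atTop_add_const_right _ _ h3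
    apply h4.congr
    intro α
    ring
  have hmem : Ioo (1/2:ℝ) 1 ∈ nhdsWithin (1:ℝ) (Iio 1) :=
    Ioo_mem_nhdsLT_of_mem (by norm_num : (1:ℝ) ∈ Ioc (1/2:ℝ) 1)
  have h2 : Tendsto (fun α => ∫ ρ in Ioo (0:ℝ) α,
      ρ ^ (2 * m - 1) * (1 - Real.log ρ) ^ (2 * m - 1) *
      (1 - ρ ^ (2 * m) * (1 - Real.log ρ) ^ (2 * m)) ^ e)
      (nhdsWithin 1 (Iio 1)) atTop := by
    apply tendsto_atTop_mono' _ _ htend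
    filter_upwards [hmem] with α hα
    exact hlow α hα
  refine ⟨?_, h2⟩
  intro hI
  have hbound : ∀ᶠ α in nhdsWithin (1:ℝ) (Iio 1),
      (∫ ρ in Ioo (0:ℝ) α, ρ ^ (2 * m - 1) * (1 - Real.log ρ) ^ (2 * m - 1) *
        (1 - ρ ^ (2 * m) * (1 - Real.log ρ) ^ (2 * m)) ^ e) ≤
      ∫ ρ in Ioo (0:ℝ) 1, |ρ ^ (2 * m - 1) * (1 - Real.log ρ) ^ (2 * m - 1) *
        (1 - ρ ^ (2 * m) * (1 - Real.log ρ) ^ (2 * m)) ^ e| := by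
    filter_upwards [self_mem_nhdsWithin] with α hα
    simp only [mem_Iio] at hα
    have hsub : Ioo (0:ℝ) α ⊆ Ioo (0:ℝ) 1 := Ioo_subset_Ioo_right hα.le
    calc (∫ ρ in Ioo (0:ℝ) α, ρ ^ (2 * m - 1) * (1 - Real.log ρ) ^ (2 * m - 1) *
          (1 - ρ ^ (2 * m) * (1 - Real.log ρ) ^ (2 * m)) ^ e)
        ≤ ∫ ρ in Ioo (0:ℝ) α, |ρ ^ (2 * m - 1) * (1 - Real.log ρ) ^ (2 * m - 1) *
          (1 - ρ ^ (2 * m) * (1 - Real.log ρ) ^ (2 * m)) ^ e| :=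
          integral_mono (hI.mono_set hsub) (IntegrableOn.mono_set hI.abs hsub) (fun x => le_abs_self _)
      _ ≤ ∫ ρ in Ioo (0:ℝ) 1, |ρ ^ (2 * m - 1) * (1 - Real.log ρ) ^ (2 * m - 1) *
          (1 - ρ ^ (2 * m) * (1 - Real.log ρ) ^ (2 * m)) ^ e| := by
          apply setIntegral_mono_set hI.abs
          · filter_upwards with x
            exact abs_nonneg _
          · exact HasSubset.Subset.eventuallyLE hsub
  have hgt := (tendsto_atTop.mp h2) ((∫ ρ in Ioo (0:ℝ) 1,
      |ρ ^ (2 * m - 1) * (1 - Real.log ρ) ^ (2 * m - 1) *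
        (1 - ρ ^ (2 * m) * (1 - Real.log ρ) ^ (2 * m)) ^ e|) + 1)
  obtain ⟨α, h₁, h₂⟩ := (hbound.and hgt).exists
  linarith
end

section
/- (Theorem 6.2) Let λ ∉ {0, −1} and μ ≠ 0, and for c₁ ∈ ℝ set P(α) = c₁ − (μ/(λ+1))·α^{λ+1}. The rotational surface with profile u satisfies k₁(α) + λ·k₂(α) = μ for all α ∈ I if and only if there exists a constant c₁ ∈ ℝ such that for all α ∈ I one has 0 < P(α) < α^{λ} and u'(α) = P(α)^{2m−1} · (α^{2mλ} − P(α)^{2m})^{−(2m−1)/(2m)}. -/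
open Real Set

noncomputable def Faux (n p : ℝ) : ℝ := p ^ (1/(n-1)) * (1 + p ^ (n/(n-1))) ^ (-1/n)

lemma Faux_pos (n : ℝ) {p : ℝ} (hp : 0 < p) : 0 < Faux n p := by
  have ht : 0 < p ^ (n/(n-1)) := Real.rpow_pos_of_pos hp _
  exact mul_pos (Real.rpow_pos_of_pos hp _) (Real.rpow_pos_of_pos (by linarith) _)

lemma hasDerivAt_Faux {n p : ℝ} (hn : 2 ≤ n) (hp : 0 < p) :
    HasDerivAt (fun q => Faux n q)
      (1/(n-1) * (1 + p ^ (n/(n-1))) ^ (-(n+1)/n) * p ^ (-(n-2)/(n-1))) p := by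
  have hn0 : (0:ℝ) < n := by linarith
  have hn1 : (0:ℝ) < n - 1 := by linarith
  have ht : 0 < p ^ (n/(n-1)) := Real.rpow_pos_of_pos hp _
  have hT : 0 < 1 + p ^ (n/(n-1)) := by linarith
  have h1 : HasDerivAt (fun q : ℝ => q ^ (1/(n-1))) (1/(n-1) * p ^ (1/(n-1) - 1)) p :=
    Real.hasDerivAt_rpow_const (Or.inl hp.ne')
  have h2 : HasDerivAt (fun q : ℝ => 1 + q ^ (n/(n-1))) (n/(n-1) * p ^ (n/(n-1) - 1)) p :=
    (Real.hasDerivAt_rpow_const (Or.inl hp.ne')).const_add 1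
  have h3 : HasDerivAt (fun q : ℝ => (1 + q ^ (n/(n-1))) ^ (-1/n))
      ((n/(n-1) * p ^ (n/(n-1) - 1)) * (-1/n) * (1 + p ^ (n/(n-1))) ^ (-1/n - 1)) p :=
    h2.rpow_const (Or.inl hT.ne')
  have h4 := h1.mul h3
  convert h4 using 1
  · rfl
  · rfl
  · rfl
  have e1 : p ^ (1/(n-1) - 1) = p ^ (-(n-2)/(n-1)) := by
    congr 1; field_simp; ring
  have e2 : (1 + p ^ (n/(n-1))) ^ (-1/n - 1) = (1 + p ^ (n/(n-1))) ^ (-(n+1)/n) := by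
    congr 1; field_simp; ring
  have e3 : (1 + p ^ (n/(n-1))) ^ (-1/n : ℝ)
      = (1 + p ^ (n/(n-1))) ^ (-(n+1)/n) * (1 + p ^ (n/(n-1))) := by
    rw [show (-1/n : ℝ) = -(n+1)/n + 1 by field_simp; ring, Real.rpow_add_one hT.ne']
  have e4 : p ^ (1/(n-1)) * p ^ (n/(n-1) - 1) = p ^ (-(n-2)/(n-1)) * p ^ (n/(n-1)) := by
    rw [← Real.rpow_add hp, ← Real.rpow_add hp]; congr 1; field_simp; ring
  rw [e1, e2, e3]
  generalize hA : p ^ (-(n-2)/(n-1)) = A at e4 ⊢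
  generalize hB : (1 + p ^ (n/(n-1))) ^ (-(n+1)/n) = B
  generalize ht' : p ^ (n/(n-1)) = t at e4 ⊢
  generalize ha : p ^ (1/(n-1)) = aa at e4 ⊢
  generalize hb : p ^ (n/(n-1) - 1) = bb at e4 ⊢
  field_simp
  linear_combination B * e4

lemma solveF {n : ℝ} {N : ℕ} (hnN : (N:ℝ) = n) (hN : 2 ≤ N) {x p : ℝ}
    (hx : 0 < x) (hp : 0 < p) (lam P : ℝ) :
    x ^ lam * Faux n p = P ↔
      0 < P ∧ P < x ^ lam ∧
      p = P ^ (N-1) * (x ^ (n*lam) - P ^ N) ^ (-(n-1)/n) := by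
  have hN0 : N ≠ 0 := by omega
  have hn2 : (2:ℝ) ≤ n := by rw [← hnN]; exact_mod_cast hN
  have hn0 : (0:ℝ) < n := by linarith
  have hn1 : (0:ℝ) < n - 1 := by linarith
  have ht : 0 < p ^ (n/(n-1)) := Real.rpow_pos_of_pos hp _
  have hT : 0 < 1 + p ^ (n/(n-1)) := by linarith
  have hxl : 0 < x ^ lam := Real.rpow_pos_of_pos hx _
  have hxn : 0 < x ^ (n*lam) := Real.rpow_pos_of_pos hx _
  have hF : 0 < Faux n p := Faux_pos n hp
  have h1 : (x ^ lam) ^ N = x ^ (n*lam) := by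
    rw [← Real.rpow_natCast (x ^ lam) N, ← Real.rpow_mul hx.le, hnN, mul_comm]
  have h2 : (Faux n p) ^ N = p ^ (n/(n-1)) / (1 + p ^ (n/(n-1))) := by
    unfold Faux
    rw [mul_pow, ← Real.rpow_natCast (p ^ (1/(n-1))) N, ← Real.rpow_mul hp.le,
      ← Real.rpow_natCast ((1 + p ^ (n/(n-1))) ^ (-1/n)) N, ← Real.rpow_mul hT.le, hnN,
      show 1/(n-1) * n = n/(n-1) by ring, show -1/n * n = -1 by field_simp,
      Real.rpow_neg_one]
    ring
  have hPow : (x ^ lam * Faux n p) ^ N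
      = x ^ (n*lam) * (p ^ (n/(n-1)) / (1 + p ^ (n/(n-1)))) := by
    rw [mul_pow, h1, h2]
  have hpt : (p ^ (n/(n-1))) ^ ((n-1)/n) = p := by
    rw [← Real.rpow_mul hp.le, show n/(n-1)*((n-1)/n) = 1 by field_simp, Real.rpow_one]
  constructor
  · intro h
    have hP0 : 0 < P := h ▸ mul_pos hxl hF
    have hPN : P ^ N = x ^ (n*lam) * (p ^ (n/(n-1)) / (1 + p ^ (n/(n-1)))) := by
      rw [← h, hPow]
    have hfrac : p ^ (n/(n-1)) / (1 + p ^ (n/(n-1))) < 1 := by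
      rw [div_lt_one hT]; linarith
    have hPNlt : P ^ N < x ^ (n*lam) := by
      calc P ^ N = x ^ (n*lam) * (p ^ (n/(n-1)) / (1 + p ^ (n/(n-1)))) := hPN
        _ < x ^ (n*lam) * 1 := mul_lt_mul_of_pos_left hfrac hxn
        _ = x ^ (n*lam) := mul_one _
    have hPlt : P < x ^ lam := lt_of_pow_lt_pow_left₀ N hxl.le (by rw [h1]; exact hPNlt)
    refine ⟨hP0, hPlt, ?_⟩
    have hD : 0 < x ^ (n*lam) - P ^ N := by linarith
    have hPT : P ^ N * (1 + p ^ (n/(n-1))) = x ^ (n*lam) * p ^ (n/(n-1)) := by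
      rw [hPN]; field_simp
    have htD : p ^ (n/(n-1)) * (x ^ (n*lam) - P ^ N) = P ^ N := by
      linear_combination -hPT
    have ht_eq : p ^ (n/(n-1)) = P ^ N / (x ^ (n*lam) - P ^ N) :=
      (eq_div_iff hD.ne').mpr htD
    have hPN1 : (P ^ N) ^ ((n-1)/n) = P ^ (N-1) := by
      rw [← Real.rpow_natCast P N, ← Real.rpow_mul hP0.le,
        show (N:ℝ)*((n-1)/n) = n-1 by rw [hnN]; field_simp,
        show n - 1 = ((N-1 : ℕ):ℝ) by push_cast [Nat.cast_sub (by omega : 1 ≤ N)]; rw [hnN],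
        Real.rpow_natCast]
    calc p = (p ^ (n/(n-1))) ^ ((n-1)/n) := hpt.symm
      _ = (P ^ N / (x ^ (n*lam) - P ^ N)) ^ ((n-1)/n) := by rw [ht_eq]
      _ = (P ^ N) ^ ((n-1)/n) / (x ^ (n*lam) - P ^ N) ^ ((n-1)/n) := by
          rw [Real.div_rpow (by positivity) hD.le]
      _ = P ^ (N-1) * (x ^ (n*lam) - P ^ N) ^ (-(n-1)/n) := by
          rw [hPN1, show (-(n-1)/n : ℝ) = -((n-1)/n) by ring, Real.rpow_neg hD.le,
            div_eq_mul_inv]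
  · rintro ⟨hP0, hPlt, hform⟩
    have hPNlt : P ^ N < x ^ (n*lam) := by
      rw [← h1]; exact pow_lt_pow_left₀ hPlt hP0.le hN0
    have hD : 0 < x ^ (n*lam) - P ^ N := by linarith
    have hPN1 : (P ^ (N-1) : ℝ) = P ^ ((n-1) : ℝ) := by
      rw [← Real.rpow_natCast P (N-1), show (((N-1 : ℕ)):ℝ) = n - 1 by
        push_cast [Nat.cast_sub (by omega : 1 ≤ N)]; rw [hnN]]
    have ht_eq : p ^ (n/(n-1)) = P ^ N * (x ^ (n*lam) - P ^ N)⁻¹ := by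
      rw [hform, Real.mul_rpow (by positivity) (by positivity), hPN1,
        ← Real.rpow_mul hP0.le, ← Real.rpow_mul hD.le,
        show (n-1)*(n/(n-1)) = n by field_simp,
        show (-(n-1)/n)*(n/(n-1)) = -1 by field_simp,
        Real.rpow_neg_one, ← Real.rpow_natCast P N, hnN]
    have hPowP : (x ^ lam * Faux n p) ^ N = P ^ N := by
      rw [hPow, ht_eq]
      have hxne : x ^ (n*lam) - P ^ N ≠ 0 := hD.ne'
      field_simp
      ring
    have hb : (0:ℝ) ≤ x ^ lam * Faux n p := (mul_pos hxl hF).le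
    calc x ^ lam * Faux n p
        = ((x ^ lam * Faux n p) ^ N) ^ ((N:ℝ)⁻¹) := (Real.pow_rpow_inv_natCast hb hN0).symm
      _ = (P ^ N) ^ ((N:ℝ)⁻¹) := by rw [hPowP]
      _ = P := Real.pow_rpow_inv_natCast hP0.le hN0

/-- (Theorem 6.2) For `λ ∉ {0, −1}` and `μ ≠ 0`, the rotational surface
`X(α,v) = (α cos v, α sin v, u(α))` satisfies `k₁ + λk₂ = μ` if and only if there is a
constant `c₁` such that, with `P(α) = c₁ − (μ/(λ+1)) α^{λ+1}`, one has
`0 < P(α) < α^{λ}` and `u'(α) = P(α)^{2m−1} (α^{2mλ} − P(α)^{2m})^{−(2m−1)/(2m)}`. -/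
theorem inhomogeneous_linear_Weingarten_iff (m : ℕ) (hm : 2 ≤ m)
    (a b : ℝ) (hI : Set.Ioo a b ⊆ Set.Ioi (0 : ℝ)) (u : ℝ → ℝ)
    (hu : ContDiffOn ℝ 2 u (Set.Ioo a b))
    (hu' : ∀ x ∈ Set.Ioo a b, 0 < deriv u x)
    (lam μ : ℝ) (hlam₀ : lam ≠ 0) (hlam₁ : lam ≠ -1) (hμ : μ ≠ 0)
    (k₁ k₂ : ℝ → ℝ)
    (hk₁ : ∀ x, k₁ x =
      -(1 / (2 * (m : ℝ) - 1)) *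
        (1 + deriv u x ^ ((2 * (m : ℝ)) / (2 * (m : ℝ) - 1)))
          ^ (-(2 * (m : ℝ) + 1) / (2 * (m : ℝ))) *
        deriv u x ^ (-(2 * (m : ℝ) - 2) / (2 * (m : ℝ) - 1)) *
        deriv (deriv u) x)
    (hk₂ : ∀ x, k₂ x =
      -(1 / x) * (1 + deriv u x ^ ((2 * (m : ℝ)) / (2 * (m : ℝ) - 1)))
          ^ (-(1 : ℝ) / (2 * (m : ℝ))) *
        deriv u x ^ ((1 : ℝ) / (2 * (m : ℝ) - 1))) :
    (∀ x ∈ Set.Ioo a b, k₁ x + lam * k₂ x = μ) ↔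
    ∃ c₁ : ℝ, ∀ x ∈ Set.Ioo a b,
      0 < c₁ - μ / (lam + 1) * x ^ (lam + 1) ∧
      c₁ - μ / (lam + 1) * x ^ (lam + 1) < x ^ lam ∧
      deriv u x = (c₁ - μ / (lam + 1) * x ^ (lam + 1)) ^ (2 * m - 1) *
        (x ^ (2 * (m : ℝ) * lam) - (c₁ - μ / (lam + 1) * x ^ (lam + 1)) ^ (2 * m))
          ^ (-(2 * (m : ℝ) - 1) / (2 * (m : ℝ))) := by
  
  have hm2 : (2:ℝ) ≤ (m:ℝ) := by exact_mod_cast hm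
  have hm' : (2:ℝ) ≤ 2*(m:ℝ) := by linarith
  have hnN : ((2*m : ℕ):ℝ) = 2*(m:ℝ) := by push_cast; ring
  have hN2 : 2 ≤ 2*m := by omega
  have hlam1 : lam + 1 ≠ 0 := fun h => hlam₁ (by linarith)
  set G : ℝ → ℝ := fun y =>
    y ^ lam * Faux (2*(m:ℝ)) (deriv u y) + μ/(lam+1) * y ^ (lam+1) with hG
  have key : ∀ x ∈ Set.Ioo a b, HasDerivAt G (x ^ lam * (μ - (k₁ x + lam * k₂ x))) x := by
    intro x hx
    have hx0 : 0 < x := hI hx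
    have hp : 0 < deriv u x := hu' x hx
    have hu2 : ContDiffOn ℝ ((1:WithTop ℕ∞)+1) u (Set.Ioo a b) := by
      convert hu using 2
      norm_num
    have hdu : ContDiffOn ℝ 1 (deriv u) (Set.Ioo a b) :=
      ((contDiffOn_succ_iff_deriv_of_isOpen isOpen_Ioo).mp hu2).2.2
    have hq : HasDerivAt (deriv u) (deriv (deriv u) x) x :=
      ((hdu.differentiableOn one_ne_zero).differentiableAt (isOpen_Ioo.mem_nhds hx)).hasDerivAt
    have hF' : HasDerivAt (fun y => Faux (2*(m:ℝ)) (deriv u y))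
        ((1/(2*(m:ℝ)-1) * (1 + deriv u x ^ ((2*(m:ℝ))/(2*(m:ℝ)-1))) ^ (-(2*(m:ℝ)+1)/(2*(m:ℝ)))
          * deriv u x ^ (-(2*(m:ℝ)-2)/(2*(m:ℝ)-1))) * deriv (deriv u) x) x :=
      (hasDerivAt_Faux hm' hp).comp x hq
    have hxl : HasDerivAt (fun y : ℝ => y ^ lam) (lam * x ^ (lam-1)) x :=
      Real.hasDerivAt_rpow_const (Or.inl hx0.ne')
    have hx2 : HasDerivAt (fun y : ℝ => μ/(lam+1) * y ^ (lam+1))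
        (μ/(lam+1) * ((lam+1) * x ^ (lam+1-1))) x :=
      (Real.hasDerivAt_rpow_const (Or.inl hx0.ne')).const_mul _
    have hsum := (hxl.mul hF').add hx2
    convert hsum using 1
    · rfl
    · rfl
    · rfl
    rw [hk₁ x, hk₂ x]
    have exl : x ^ (lam - 1) = x ^ lam * x⁻¹ := by
      rw [Real.rpow_sub hx0, Real.rpow_one, div_eq_mul_inv]
    have exp1 : x ^ (lam + 1 - 1) = x ^ lam := by norm_num
    rw [exl, exp1]
    unfold Faux
    generalize deriv u x ^ (1/(2*(m:ℝ)-1)) = A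
    generalize (1 + deriv u x ^ ((2*(m:ℝ))/(2*(m:ℝ)-1))) ^ (-(2*(m:ℝ)+1)/(2*(m:ℝ))) = Tk
    generalize (1 + deriv u x ^ ((2*(m:ℝ))/(2*(m:ℝ)-1))) ^ (-1/(2*(m:ℝ))) = Tm
    generalize deriv u x ^ (-(2*(m:ℝ)-2)/(2*(m:ℝ)-1)) = pk
    generalize deriv (deriv u) x = w
    generalize x ^ lam = X
    have hn1 : 2*(m:ℝ) - 1 ≠ 0 := by linarith
    field_simp
    ring
  constructor
  · intro heq
    rcases Set.eq_empty_or_nonempty (Set.Ioo a b) with hS | ⟨x₀, hx₀⟩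
    · exact ⟨0, by simp [hS]⟩
    refine ⟨G x₀, fun x hx => ?_⟩
    have hzero : ∀ y ∈ Set.Ioo a b, HasDerivAt G 0 y := fun y hy => by
      simpa only [heq y hy, sub_self, mul_zero] using key y hy
    have hconst : G x = G x₀ :=
      Convex.is_const_of_fderivWithin_eq_zero (convex_Ioo a b)
        (fun y hy => ((hzero y hy).differentiableAt).differentiableWithinAt)
        (fun y hy => by
          rw [fderivWithin_of_isOpen isOpen_Ioo hy]
          ext
          simp [← toSpanSingleton_deriv, (hzero y hy).deriv]) hx hx₀
    have hFx : x ^ lam * Faux (2*(m:ℝ)) (deriv u x)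
        = G x₀ - μ/(lam+1) * x ^ (lam+1) := by
      have : x ^ lam * Faux (2*(m:ℝ)) (deriv u x) + μ/(lam+1) * x ^ (lam+1) = G x₀ := hconst
      linarith
    exact (solveF hnN hN2 (hI hx) (hu' x hx) lam _).mp hFx
  · rintro ⟨c₁, hc⟩ x hx
    have hconst : ∀ y ∈ Set.Ioo a b, G y = c₁ := fun y hy => by
      have h := (solveF hnN hN2 (hI hy) (hu' y hy) lam
        (c₁ - μ/(lam+1) * y ^ (lam+1))).mpr (hc y hy)
      show y ^ lam * Faux (2*(m:ℝ)) (deriv u y) + μ/(lam+1) * y ^ (lam+1) = c₁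
      linarith
    have hEv : G =ᶠ[nhds x] fun _ => c₁ :=
      Filter.eventuallyEq_of_mem (isOpen_Ioo.mem_nhds hx) hconst
    have h0 : HasDerivAt G 0 x := (hasDerivAt_const x c₁).congr_of_eventuallyEq hEv
    have hval := (key x hx).unique h0
    have hxl0 : x ^ lam ≠ 0 := (Real.rpow_pos_of_pos (hI hx) lam).ne'
    have : μ - (k₁ x + lam * k₂ x) = 0 := by
      rcases mul_eq_zero.mp hval with h | h
      · exact absurd h hxl0
      · exact h
    linarith
end

section
/- Let r > 0 and c ∈ ℝ, and define u : (0, r) → ℝ by u(α) = c − (r^{2m} − α^{2m})^{1/(2m)}. Then u' > 0 on (0, r) and the principal curvatures of the corresponding rotational surface satisfy k₁(α) = k₂(α) = −1/r for all α ∈ (0, r); that is, the sphere of radius r of the norm ‖·‖ (translated along the rotation axis) has both principal curvatures constant equal to −1/r. -/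
open Real Set

/-- The sphere of radius `r` of the norm `‖x‖ = ((x₁²+x₂²)^m + x₃^{2m})^{1/(2m)}`
(translated along the rotation axis), with profile
`u(α) = c − (r^{2m} − α^{2m})^{1/(2m)}` on `(0, r)`, satisfies `u' > 0` and has both
principal curvatures constant equal to `−1/r`. -/
theorem sphere_principal_curvatures (m : ℕ) (hm : 2 ≤ m) (r c : ℝ) (hr : 0 < r)
    (u : ℝ → ℝ)
    (hu : ∀ α, u α = c - (r ^ (2 * m) - α ^ (2 * m)) ^ ((1 : ℝ) / (2 * (m : ℝ))))
    (k₁ k₂ : ℝ → ℝ)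
    (hk₁ : ∀ α, k₁ α =
      -(1 / (2 * (m : ℝ) - 1)) *
        (1 + deriv u α ^ ((2 * (m : ℝ)) / (2 * (m : ℝ) - 1)))
          ^ (-(2 * (m : ℝ) + 1) / (2 * (m : ℝ))) *
        deriv u α ^ (-(2 * (m : ℝ) - 2) / (2 * (m : ℝ) - 1)) *
        deriv (deriv u) α)
    (hk₂ : ∀ α, k₂ α =
      -(1 / α) * (1 + deriv u α ^ ((2 * (m : ℝ)) / (2 * (m : ℝ) - 1)))
          ^ (-(1 : ℝ) / (2 * (m : ℝ))) *
        deriv u α ^ ((1 : ℝ) / (2 * (m : ℝ) - 1))) :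
    ∀ α ∈ Set.Ioo (0 : ℝ) r,
      0 < deriv u α ∧ k₁ α = -1 / r ∧ k₂ α = -1 / r := by
  have hm2 : (2 : ℝ) ≤ (m : ℝ) := by exact_mod_cast hm
  have hM0 : (2 : ℝ) * (m : ℝ) ≠ 0 := by nlinarith
  have hM1 : (2 : ℝ) * (m : ℝ) - 1 ≠ 0 := by nlinarith
  have hM1pos : (0 : ℝ) < 2 * (m : ℝ) - 1 := by nlinarith
  set p : ℝ := 1 / (2 * (m : ℝ)) with hp
  -- derivative of u on (0, r)
  have key : ∀ α ∈ Ioo (0 : ℝ) r,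
      HasDerivAt u (α ^ (2 * m - 1) * (r ^ (2 * m) - α ^ (2 * m)) ^ (p - 1)) α := by
    intro α hα
    have hw : 0 < r ^ (2 * m) - α ^ (2 * m) := by
      have := pow_lt_pow_left₀ hα.2 hα.1.le (show 2 * m ≠ 0 by omega)
      linarith
    have hg : HasDerivAt (fun x : ℝ => r ^ (2 * m) - x ^ (2 * m))
        (-((2 * m : ℕ) * α ^ (2 * m - 1))) α := (hasDerivAt_pow (2 * m) α).const_sub _
    have hmain := (hg.rpow_const (p := p) (Or.inl hw.ne')).const_sub c
    have hfun : u = fun x => c - (r ^ (2 * m) - x ^ (2 * m)) ^ p := funext hu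
    rw [hfun]
    have hm0 : (m : ℝ) ≠ 0 := by nlinarith
    have h2mp : ((2 * m : ℕ) : ℝ) * p = 1 := by rw [hp]; push_cast; field_simp
    refine hmain.congr_deriv ?_
    rw [show -(-(((2 * m : ℕ) : ℝ) * α ^ (2 * m - 1)) * p *
          (r ^ (2 * m) - α ^ (2 * m)) ^ (p - 1))
        = (((2 * m : ℕ) : ℝ) * p) * (α ^ (2 * m - 1) *
          (r ^ (2 * m) - α ^ (2 * m)) ^ (p - 1)) by ring, h2mp, one_mul]
  intro α hα
  have hα0 := hα.1
  have hαr := hα.2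
  have hw : 0 < r ^ (2 * m) - α ^ (2 * m) := by
    have := pow_lt_pow_left₀ hα.2 hα.1.le (show 2 * m ≠ 0 by omega)
    linarith
  set w : ℝ := r ^ (2 * m) - α ^ (2 * m) with hwdef
  have hD : deriv u α = α ^ (2 * m - 1) * w ^ (p - 1) := (key α hα).deriv
  have hwp : (0 : ℝ) < w ^ (p - 1) := Real.rpow_pos_of_pos hw _
  have hDpos : 0 < deriv u α := by
    rw [hD]; exact mul_pos (pow_pos hα0 _) hwp
  -- second derivative
  have hEq : deriv u =ᶠ[nhds α]
      (fun x => x ^ (2 * m - 1) * (r ^ (2 * m) - x ^ (2 * m)) ^ (p - 1)) := by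
    filter_upwards [Ioo_mem_nhds hα0 hαr] with x hx
    exact (key x hx).deriv
  have hq : ((2 * m - 1 : ℕ) : ℝ) = 2 * (m : ℝ) - 1 := by
    rw [Nat.cast_sub (by omega : 1 ≤ 2 * m)]; push_cast; ring
  have hq2 : ((2 * m - 2 : ℕ) : ℝ) = 2 * (m : ℝ) - 2 := by
    rw [Nat.cast_sub (by omega : 2 ≤ 2 * m)]; push_cast; ring
  have hg : HasDerivAt (fun x : ℝ => r ^ (2 * m) - x ^ (2 * m))
      (-((2 * m : ℕ) * α ^ (2 * m - 1))) α := (hasDerivAt_pow (2 * m) α).const_sub _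
  have h2 : HasDerivAt (fun x : ℝ => (r ^ (2 * m) - x ^ (2 * m)) ^ (p - 1))
      (-((2 * m : ℕ) * α ^ (2 * m - 1)) * (p - 1) * w ^ (p - 1 - 1)) α :=
    hg.rpow_const (Or.inl hw.ne')
  have h1 : HasDerivAt (fun x : ℝ => x ^ (2 * m - 1))
      ((2 * m - 1 : ℕ) * α ^ (2 * m - 1 - 1)) α := hasDerivAt_pow _ _
  have hf := h1.mul h2
  have hp1 : 2 * (m : ℝ) * p = 1 := by rw [hp]; field_simp [hM0]
  have hD2 : deriv (deriv u) α
      = (2 * (m : ℝ) - 1) * α ^ (2 * m - 2) * r ^ (2 * m) * w ^ (p - 2) := by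
    rw [hEq.deriv_eq, show (fun x : ℝ => x ^ (2 * m - 1) * (r ^ (2 * m) - x ^ (2 * m)) ^ (p - 1)) = ((fun x : ℝ => x ^ (2 * m - 1)) * fun x : ℝ => (r ^ (2 * m) - x ^ (2 * m)) ^ (p - 1)) from rfl, hf.deriv]
    have e1 : w ^ (p - 1) = w ^ (p - 2) * w := by
      rw [show p - 1 = (p - 2) + 1 by ring, Real.rpow_add hw, Real.rpow_one]
    have e2 : p - 1 - 1 = p - 2 := by ring
    have e3 : 2 * m - 1 - 1 = 2 * m - 2 := by omega
    have e4 : α ^ (2 * m - 1) = α ^ (2 * m - 2) * α := by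
      rw [← pow_succ]; congr 1; omega
    have e5 : α ^ (2 * m) = α ^ (2 * m - 2) * α * α := by
      rw [← pow_succ, ← pow_succ]; congr 1; omega
    have e6 : r ^ (2 * m) = w + α ^ (2 * m - 2) * α * α := by
      rw [hwdef, ← e5]; ring
    rw [e1, e2, e3, e4, e6, hq]
    push_cast
    linear_combination
      (-(α ^ (2 * m - 2) * α ^ (2 * m - 2) * α ^ 2 * w ^ (p - 2))) * hp1
  have hA : 1 + deriv u α ^ (2 * (m : ℝ) / (2 * (m : ℝ) - 1)) = r ^ (2 * m) * w⁻¹ := by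
    rw [hD, Real.mul_rpow (pow_pos hα0 _).le hwp.le,
      ← Real.rpow_natCast α (2 * m - 1), ← Real.rpow_mul hα0.le, ← Real.rpow_mul hw.le,
      show ((2 * m - 1 : ℕ) : ℝ) * (2 * (m : ℝ) / (2 * (m : ℝ) - 1)) = ((2 * m : ℕ) : ℝ) by
        rw [hq]; push_cast; field_simp,
      show (p - 1) * (2 * (m : ℝ) / (2 * (m : ℝ) - 1)) = -1 by
        rw [hp]; field_simp; ring,
      Real.rpow_natCast, Real.rpow_neg_one]
    field_simp
    rw [hwdef]; ring
  have hApos : (0 : ℝ) < r ^ (2 * m) * w⁻¹ := mul_pos (pow_pos hr _) (inv_pos.2 hw)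
  refine ⟨hDpos, ?_, ?_⟩
  · -- k₁
    rw [hk₁ α, hA, hD2, hD]
    set E : ℝ := -(2 * (m : ℝ) + 1) / (2 * (m : ℝ)) with hE
    set F : ℝ := -(2 * (m : ℝ) - 2) / (2 * (m : ℝ) - 1) with hF
    have hb : (0 : ℝ) < α ^ (2 * m - 1) * w ^ (p - 1) := mul_pos (pow_pos hα0 _) hwp
    have ha1 : (0 : ℝ) < 1 / (2 * (m : ℝ) - 1) := by positivity
    have ha2 : (0 : ℝ) < (r ^ (2 * m) * w⁻¹) ^ E := Real.rpow_pos_of_pos hApos _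
    have ha3 : (0 : ℝ) < (α ^ (2 * m - 1) * w ^ (p - 1)) ^ F := Real.rpow_pos_of_pos hb _
    have ha4 : (0 : ℝ) < (2 * (m : ℝ) - 1) * α ^ (2 * m - 2) * r ^ (2 * m) * w ^ (p - 2) := by
      have h1' := Real.rpow_pos_of_pos hw (p - 2)
      have h2' := pow_pos hα0 (2 * m - 2)
      have h3' := pow_pos hr (2 * m)
      have := mul_pos (mul_pos (mul_pos hM1pos h2') h3') h1'
      linarith
    have hX : (1 / (2 * (m : ℝ) - 1)) * (r ^ (2 * m) * w⁻¹) ^ E *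
        (α ^ (2 * m - 1) * w ^ (p - 1)) ^ F *
        ((2 * (m : ℝ) - 1) * α ^ (2 * m - 2) * r ^ (2 * m) * w ^ (p - 2)) = 1 / r := by
      have hXpos : (0 : ℝ) < (1 / (2 * (m : ℝ) - 1)) * (r ^ (2 * m) * w⁻¹) ^ E *
          (α ^ (2 * m - 1) * w ^ (p - 1)) ^ F *
          ((2 * (m : ℝ) - 1) * α ^ (2 * m - 2) * r ^ (2 * m) * w ^ (p - 2)) :=
        mul_pos (mul_pos (mul_pos ha1 ha2) ha3) ha4
      refine Real.log_injOn_pos (Set.mem_Ioi.mpr hXpos)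
        (Set.mem_Ioi.mpr (by positivity)) ?_
      rw [Real.log_mul (mul_pos (mul_pos ha1 ha2) ha3).ne' ha4.ne',
        Real.log_mul (mul_pos ha1 ha2).ne' ha3.ne',
        Real.log_mul ha1.ne' ha2.ne']
      have hlb : Real.log ((r ^ (2 * m) * w⁻¹) ^ E)
          = E * (((2 * m : ℕ) : ℝ) * Real.log r - Real.log w) := by
        rw [Real.log_rpow hApos, Real.log_mul (pow_pos hr _).ne' (inv_pos.2 hw).ne',
          Real.log_pow, Real.log_inv]
        ring
      have hlc : Real.log ((α ^ (2 * m - 1) * w ^ (p - 1)) ^ F)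
          = F * (((2 * m - 1 : ℕ) : ℝ) * Real.log α + (p - 1) * Real.log w) := by
        rw [Real.log_rpow hb, Real.log_mul (pow_pos hα0 _).ne' hwp.ne',
          Real.log_pow, Real.log_rpow hw]
      have hld : Real.log ((2 * (m : ℝ) - 1) * α ^ (2 * m - 2) * r ^ (2 * m) * w ^ (p - 2))
          = Real.log (2 * (m : ℝ) - 1) + ((2 * m - 2 : ℕ) : ℝ) * Real.log α
            + ((2 * m : ℕ) : ℝ) * Real.log r + (p - 2) * Real.log w := by
        rw [Real.log_mul (mul_pos (mul_pos hM1pos (pow_pos hα0 _)) (pow_pos hr _)).ne'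
            (Real.rpow_pos_of_pos hw _).ne',
          Real.log_mul (mul_pos hM1pos (pow_pos hα0 _)).ne' (pow_pos hr _).ne',
          Real.log_mul hM1 (pow_pos hα0 _).ne',
          Real.log_pow, Real.log_pow, Real.log_rpow hw]
      rw [hlb, hlc, hld, one_div (2 * (m : ℝ) - 1), Real.log_inv, one_div r, Real.log_inv,
        hq, hq2, hE, hF, hp]
      push_cast
      field_simp
      ring
    linear_combination -hX
  · -- k₂
    rw [hk₂ α, hA, hD]
    set E : ℝ := -(1 : ℝ) / (2 * (m : ℝ)) with hE
    set F : ℝ := (1 : ℝ) / (2 * (m : ℝ) - 1) with hF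
    have hb : (0 : ℝ) < α ^ (2 * m - 1) * w ^ (p - 1) := mul_pos (pow_pos hα0 _) hwp
    have ha1 : (0 : ℝ) < 1 / α := by positivity
    have ha2 : (0 : ℝ) < (r ^ (2 * m) * w⁻¹) ^ E := Real.rpow_pos_of_pos hApos _
    have ha3 : (0 : ℝ) < (α ^ (2 * m - 1) * w ^ (p - 1)) ^ F := Real.rpow_pos_of_pos hb _
    have hX : (1 / α) * (r ^ (2 * m) * w⁻¹) ^ E *
        (α ^ (2 * m - 1) * w ^ (p - 1)) ^ F = 1 / r := by
      have hXpos : (0 : ℝ) < (1 / α) * (r ^ (2 * m) * w⁻¹) ^ E *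
          (α ^ (2 * m - 1) * w ^ (p - 1)) ^ F := mul_pos (mul_pos ha1 ha2) ha3
      refine Real.log_injOn_pos (Set.mem_Ioi.mpr hXpos)
        (Set.mem_Ioi.mpr (by positivity)) ?_
      rw [Real.log_mul (mul_pos ha1 ha2).ne' ha3.ne', Real.log_mul ha1.ne' ha2.ne']
      have hlb : Real.log ((r ^ (2 * m) * w⁻¹) ^ E)
          = E * (((2 * m : ℕ) : ℝ) * Real.log r - Real.log w) := by
        rw [Real.log_rpow hApos, Real.log_mul (pow_pos hr _).ne' (inv_pos.2 hw).ne',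
          Real.log_pow, Real.log_inv]
        ring
      have hlc : Real.log ((α ^ (2 * m - 1) * w ^ (p - 1)) ^ F)
          = F * (((2 * m - 1 : ℕ) : ℝ) * Real.log α + (p - 1) * Real.log w) := by
        rw [Real.log_rpow hb, Real.log_mul (pow_pos hα0 _).ne' hwp.ne',
          Real.log_pow, Real.log_rpow hw]
      rw [hlb, hlc, one_div α, Real.log_inv, one_div r, Real.log_inv, hq, hE, hF, hp]
      push_cast
      field_simp
      ring
    linear_combination -hX
end
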